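/- Let r ≥ 1 and A_0 = Id, A_1, …, A_r be n×n complex matrices satisfying ∑_{i+j=k, 0≤i,j≤r} ⟨A_i v, A_j w⟩ = 0 for every k ≥ 1 and all v, w ∈ ℂⁿ. For 0 ≤ i ≤ r+1 define K_i = ∩_{r≥j≥i} ker A_j (with K_{r+1} = ℂⁿ) and V_i = ∑_{r≥j≥i} A_j(K_{j+1}). Then ⟨A_j u, A_{j'} u'⟩ = 0 whenever j, j' ≥ 0 with j + j' ≥ 1, u ∈ K_{j+1} and u' ∈ K_{j'+1}; consequently, V_i is isotropic for every i ≥ 1, and V_0 is perpendicular to V_1. -/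

import Mathlib

set_option synthInstance.maxHeartbeats 1000000
set_option maxHeartbeats 1000000

open scoped Matrix ComplexConjugate

/-- The matrix `s = diag(-I_p, I_q)`. -/
noncomputable def sMat (p q : ℕ) : Matrix (Fin (p + q)) (Fin (p + q)) ℂ :=
  Matrix.diagonal fun i => if (i : ℕ) < p then (-1 : ℂ) else 1

/-- The Hermitian form `⟨v,w⟩ = -∑_{i<p} conj(v_i) w_i + ∑_{i≥p} conj(v_i) w_i`
of signature `(p,q)` on `ℂⁿ`, `n = p + q`. -/
noncomputable def herm (p q : ℕ) (v w : Fin (p + q) → ℂ) : ℂ :=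
  dotProduct (star v) ((sMat p q).mulVec w)


lemma herm_zero_left (p q : ℕ) (w : Fin (p+q) → ℂ) : herm p q 0 w = 0 := by
  simp [herm]

lemma herm_zero_right (p q : ℕ) (v : Fin (p+q) → ℂ) : herm p q v 0 = 0 := by
  simp [herm]

lemma herm_conj (p q : ℕ) (v w : Fin (p+q) → ℂ) :
    herm p q v w = conj (herm p q w v) := by
  simp only [herm, dotProduct, sMat, Matrix.mulVec_diagonal, map_sum, Pi.star_apply]
  refine Finset.sum_congr rfl fun i _ => ?_
  by_cases h : (i : ℕ) < p <;> simp [h, map_mul, mul_comm, mul_left_comm]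

noncomputable def hermL (p q : ℕ) (x : Fin (p+q) → ℂ) : (Fin (p+q) → ℂ) →ₗ[ℂ] ℂ where
  toFun y := herm p q x y
  map_add' y z := by simp [herm, Matrix.mulVec_add, dotProduct_add]
  map_smul' c y := by
    simp [herm, Matrix.mulVec_smul, dotProduct_smul, smul_eq_mul]

/-- **Isotropy of the filtration spaces `V_i` (proof of Theorem 4.5).**
Let `A_0 = Id, A_1, …, A_r` satisfy the `U(p,q)`-reality condition
`∑_{i+j=k} ⟨A_i v, A_j w⟩ = 0` for all `k ≥ 1`.  With `K_i = ∩_{j≥i} ker A_j` and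
`V_i = ∑_{j≥i} A_j(K_{j+1})` one has `⟨A_j u, A_{j'} u'⟩ = 0` whenever `j + j' ≥ 1`,
`u ∈ K_{j+1}`, `u' ∈ K_{j'+1}`; consequently `V_i` is isotropic for `i ≥ 1` and `V_0` is
perpendicular to `V_1`. -/
theorem filtration_isotropic (p q : ℕ) (r : ℕ) (hr : 1 ≤ r)
    (A : ℕ → Matrix (Fin (p + q)) (Fin (p + q)) ℂ) (hA0 : A 0 = 1)
    (hreal : ∀ k : ℕ, 1 ≤ k → ∀ v w : Fin (p + q) → ℂ,
      (∑ i ∈ Finset.range (r + 1), ∑ j ∈ Finset.range (r + 1),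
        if i + j = k then herm p q ((A i).mulVec v) ((A j).mulVec w) else 0) = 0)
    (K : ℕ → Submodule ℂ (Fin (p + q) → ℂ))
    (hK : ∀ i, K i = ⨅ j ∈ Finset.Icc i r, LinearMap.ker (A j).mulVecLin)
    (V : ℕ → Submodule ℂ (Fin (p + q) → ℂ))
    (hV : ∀ i, V i = ⨆ j ∈ Finset.Icc i r, (K (j + 1)).map (A j).mulVecLin) :
    (∀ j j' : ℕ, j ≤ r → j' ≤ r → 1 ≤ j + j' →
      ∀ u ∈ K (j + 1), ∀ u' ∈ K (j' + 1),
        herm p q ((A j).mulVec u) ((A j').mulVec u') = 0) ∧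
    (∀ i : ℕ, 1 ≤ i → ∀ x ∈ V i, ∀ y ∈ V i, herm p q x y = 0) ∧
    (∀ x ∈ V 0, ∀ y ∈ V 1, herm p q x y = 0) := by
  have memK : ∀ i m : ℕ, i ≤ m → m ≤ r → ∀ u ∈ K i, (A m).mulVec u = 0 := by
    intro i m him hmr u hu
    rw [hK] at hu
    have h1 := (Submodule.mem_iInf _).1 hu m
    have h2 := (Submodule.mem_iInf _).1 h1 (Finset.mem_Icc.2 ⟨him, hmr⟩)
    simpa using h2
  have key : ∀ j j' : ℕ, j ≤ r → j' ≤ r → 1 ≤ j + j' →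
      ∀ u ∈ K (j + 1), ∀ u' ∈ K (j' + 1),
        herm p q ((A j).mulVec u) ((A j').mulVec u') = 0 := by
    intro j j' hj hj' hjj' u hu u' hu'
    have h := hreal (j + j') hjj' u u'
    have hmain : (∑ i ∈ Finset.range (r + 1), ∑ i' ∈ Finset.range (r + 1),
        if i + i' = j + j' then herm p q ((A i).mulVec u) ((A i').mulVec u') else 0)
        = herm p q ((A j).mulVec u) ((A j').mulVec u') := by
      rw [Finset.sum_eq_single_of_mem j (Finset.mem_range.2 (Nat.lt_succ_of_le hj))]
      · rw [Finset.sum_eq_single_of_mem j' (Finset.mem_range.2 (Nat.lt_succ_of_le hj'))]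
        · simp
        · intro i' _ hne
          split
          · next heq => exact absurd (by omega : i' = j') hne
          · rfl
      · intro i hi hne
        refine Finset.sum_eq_zero fun i' hi' => ?_
        split
        · next heq =>
          rcases lt_or_gt_of_ne hne with hlt | hgt
          · have hz : (A i').mulVec u' = 0 :=
              memK (j' + 1) i' (by omega)
                (Nat.lt_succ_iff.1 (Finset.mem_range.1 hi')) u' hu'
            rw [hz, herm_zero_right]
          · have hz : (A i).mulVec u = 0 :=
              memK (j + 1) i (by omega)
                (Nat.lt_succ_iff.1 (Finset.mem_range.1 hi)) u hu
            rw [hz, herm_zero_left]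
        · rfl
    rw [hmain] at h
    exact h
  have perp : ∀ i i' : ℕ, 1 ≤ i + i' → ∀ x ∈ V i, ∀ y ∈ V i', herm p q x y = 0 := by
    intro i i' hii' x hx y hy
    have hx' : ∀ j' ∈ Finset.Icc i' r, ∀ u' ∈ K (j' + 1),
        herm p q x ((A j').mulVec u') = 0 := by
      intro j' hj' u' hu'
      have hj'1 := Finset.mem_Icc.1 hj'
      set w := (A j').mulVec u' with hw
      have hsub : V i ≤ LinearMap.ker (hermL p q w) := by
        rw [hV]
        refine iSup₂_le fun j hj => ?_
        rw [Submodule.map_le_iff_le_comap]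
        intro u hu
        have hj1 := Finset.mem_Icc.1 hj
        have hk := key j' j hj'1.2 hj1.2 (by omega) u' hu' u hu
        simp only [Submodule.mem_comap, LinearMap.mem_ker, Matrix.mulVecLin_apply]
        simpa [hermL, hw] using hk
      have h0 : herm p q w x = 0 := hsub hx
      rw [herm_conj, h0]
      simp
    have hker : V i' ≤ LinearMap.ker (hermL p q x) := by
      rw [hV]
      refine iSup₂_le fun j' hj' => ?_
      rw [Submodule.map_le_iff_le_comap]
      intro u' hu'
      simp only [Submodule.mem_comap, LinearMap.mem_ker, Matrix.mulVecLin_apply]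
      exact hx' j' hj' u' hu'
    exact hker hy
  exact ⟨key, fun i hi x hx y hy => perp i i (by omega) x hx y hy,
    fun x hx y hy => perp 0 1 (by omega) x hx y hy⟩
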